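/- arXiv:1307.0490 — 3 statements merged into one kernel-verified Lean document; each statement's English description precedes it below -/
import Mathlib

section
/- Let z ∈ ℝ^n with Σ_i z_i = 0, σ a permutation with z_{σ(1)} ≤ ... ≤ z_{σ(n)}, and c ∈ ℝ^n with Σ_i c_i = 0. If Σ_{i=1}^j c_{σ(i)} ≥ 0 for all j ∈ {1,...,n−1}, then Σ_{i=1}^n z_i c_i ≤ 0. -/
open Fin.NatCast

theorem stmt3 (n : ℕ) (z c : Fin (n+1) → ℝ)
    (hz : ∑ i, z i = 0) (hc : ∑ i, c i = 0)
    (σ : Equiv.Perm (Fin (n+1))) (hσ : Monotone (z ∘ σ))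
    (hpos : ∀ j : ℕ, 1 ≤ j → j ≤ n →
      0 ≤ ∑ i ∈ Finset.univ.filter (fun i : Fin (n+1) => (i : ℕ) < j), c (σ i)) :
    ∑ i, z i * c i ≤ 0 := by
  set a : ℕ → ℝ := fun i => z (σ (i : Fin (n+1))) with ha
  set b : ℕ → ℝ := fun i => c (σ (i : Fin (n+1))) with hb
  have hperm : ∑ i, z i * c i = ∑ i ∈ Finset.range (n+1), a i * b i := by
    rw [← Equiv.sum_comp σ (fun i => z i * c i),
      ← Fin.sum_univ_eq_sum_range (fun i => a i * b i) (n+1)]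
    apply Finset.sum_congr rfl
    intro i _
    simp [ha, hb, Fin.cast_val_eq_self]
  have hbsum : ∑ i ∈ Finset.range (n+1), b i = 0 := by
    rw [← Fin.sum_univ_eq_sum_range (fun i => b i) (n+1)]
    rw [← Equiv.sum_comp σ c] at hc
    rw [← hc]
    apply Finset.sum_congr rfl
    intro i _
    simp [hb, Fin.cast_val_eq_self]
  have hS : ∀ j, 1 ≤ j → j ≤ n → 0 ≤ ∑ i ∈ Finset.range j, b i := by
    intro j h1 h2
    have := hpos j h1 h2
    have heq : ∑ i ∈ Finset.univ.filter (fun i : Fin (n+1) => (i : ℕ) < j), c (σ i)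
        = ∑ i ∈ Finset.range j, b i := by
      refine Finset.sum_nbij' (fun i => (i : ℕ)) (fun k => (k : Fin (n+1))) ?_ ?_ ?_ ?_ ?_
      · intro i hi
        simp only [Finset.mem_filter, Finset.mem_univ, true_and] at hi
        simpa using hi
      · intro k hk
        simp only [Finset.mem_range] at hk
        simp only [Finset.mem_filter, Finset.mem_univ, true_and]
        rw [Fin.val_natCast, Nat.mod_eq_of_lt (by omega)]
        exact hk
      · intro i hi
        exact Fin.cast_val_eq_self i
      · intro k hk
        simp only [Finset.mem_range] at hk
        show ((k : Fin (n+1)) : ℕ) = k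
        rw [Fin.val_natCast]
        exact Nat.mod_eq_of_lt (by omega)
      · intro i hi
        rw [hb]
        simp [Fin.cast_val_eq_self i]
    rw [heq] at this
    exact this
  rw [hperm]
  have habel := Finset.sum_range_by_parts a b (n+1)
  simp only [smul_eq_mul, Nat.add_sub_cancel] at habel
  rw [habel, hbsum, mul_zero, zero_sub, neg_nonpos]
  apply Finset.sum_nonneg
  intro i hi
  simp only [Finset.mem_range] at hi
  apply mul_nonneg
  · have : a i ≤ a (i+1) := by
      apply hσ
      show ((i : Fin (n+1)) ≤ ((i+1 : ℕ) : Fin (n+1)))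
      rw [Fin.le_def, Fin.val_natCast, Fin.val_natCast,
        Nat.mod_eq_of_lt (by omega), Nat.mod_eq_of_lt (by omega)]
      omega
    linarith
  · exact hS (i+1) (by omega) (by omega)
end

section
/- Let z ∈ ℝ^n with Σ_i z_i = 0, σ a permutation with z_{σ(1)} ≤ ... ≤ z_{σ(n)}, and c ∈ ℝ^n with Σ_i c_i = 0. Suppose there exists b̄ > 0 with Σ_{i=1}^j c_{σ(i)} ≥ b̄ for all j ∈ {1,...,n−1}. Then Σ_{i=1}^n z_i c_i ≤ −b̄ · max_{1 ≤ i ≤ n} |z_i|. -/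
open Fin.NatCast in
theorem stmt4 (n : ℕ) (z c : Fin (n+1) → ℝ)
    (hz : ∑ i, z i = 0) (hc : ∑ i, c i = 0)
    (σ : Equiv.Perm (Fin (n+1))) (hσ : Monotone (z ∘ σ))
    (bbar : ℝ) (hbbar : 0 < bbar)
    (hpos : ∀ j : ℕ, 1 ≤ j → j ≤ n →
      bbar ≤ ∑ i ∈ Finset.univ.filter (fun i : Fin (n+1) => (i : ℕ) < j), c (σ i)) :
    ∑ i, z i * c i ≤ -bbar * (Finset.univ.sup' Finset.univ_nonempty fun i => |z i|) := by
  classical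
  set w : ℕ → ℝ := fun i => z (σ (i : Fin (n+1))) with hw
  set d : ℕ → ℝ := fun i => c (σ (i : Fin (n+1))) with hd
  have hcast : ∀ i : Fin (n+1), ((i : ℕ) : Fin (n+1)) = i := fun i => Fin.cast_val_eq_self i
  have hlast : ((n : ℕ) : Fin (n+1)) = Fin.last n := by
    apply Fin.ext
    simp [Fin.val_cast_of_lt (Nat.lt_succ_self n)]
  -- partial sums over filter = partial sums over range
  have hfilter : ∀ j : ℕ, j ≤ n + 1 →
      ∑ i ∈ Finset.univ.filter (fun i : Fin (n+1) => (i : ℕ) < j), c (σ i)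
        = ∑ i ∈ Finset.range j, d i := by
    intro j hj
    have h1 : Finset.range j = (Finset.range (n+1)).filter (fun i => i < j) := by
      ext x; simp only [Finset.mem_filter, Finset.mem_range]; omega
    rw [h1, Finset.sum_filter, Finset.sum_filter,
      ← Fin.sum_univ_eq_sum_range (fun i => if i < j then d i else 0) (n+1)]
    refine Finset.sum_congr rfl fun i _ => ?_
    simp only [hd, hcast i]
  have hsum : ∑ i, z i * c i = ∑ i ∈ Finset.range (n+1), w i * d i := by
    rw [← Equiv.sum_comp σ (fun i => z i * c i),
      ← Fin.sum_univ_eq_sum_range (fun i => w i * d i) (n+1)]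
    exact Finset.sum_congr rfl fun i _ => by simp [hw, hd, hcast i]
  have hdsum : ∑ i ∈ Finset.range (n+1), d i = 0 := by
    rw [← Fin.sum_univ_eq_sum_range (fun i => d i) (n+1), ← hc, ← Equiv.sum_comp σ c]
    exact Finset.sum_congr rfl fun i _ => by simp [hd, hcast i]
  -- Abel summation
  have habel := Finset.sum_range_by_parts w d (n+1)
  simp only [smul_eq_mul, Nat.add_sub_cancel, hdsum, mul_zero, zero_sub] at habel
  rw [hsum, habel]
  -- bound each term
  have hmono : ∀ i : ℕ, i < n → w i ≤ w (i+1) := by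
    intro i hi
    apply hσ
    rw [Fin.le_def, Fin.val_cast_of_lt (by omega), Fin.val_cast_of_lt (by omega)]
    omega
  have key : ∀ i ∈ Finset.range n,
      bbar * (w (i+1) - w i) ≤ (w (i+1) - w i) * ∑ j ∈ Finset.range (i+1), d j := by
    intro i hi
    have hi' := Finset.mem_range.mp hi
    have hm := hmono i hi'
    have hSb : bbar ≤ ∑ j ∈ Finset.range (i+1), d j := by
      rw [← hfilter (i+1) (by omega)]
      exact hpos (i+1) (by omega) (by omega)
    have := mul_le_mul_of_nonneg_right hSb (by linarith : (0:ℝ) ≤ w (i+1) - w i)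
    linarith [this, mul_comm (∑ j ∈ Finset.range (i+1), d j) (w (i+1) - w i)]
  have hT : bbar * (w n - w 0) ≤ ∑ i ∈ Finset.range n, (w (i+1) - w i) * ∑ j ∈ Finset.range (i+1), d j := by
    calc bbar * (w n - w 0) = ∑ i ∈ Finset.range n, bbar * (w (i+1) - w i) := by
          rw [← Finset.mul_sum, Finset.sum_range_sub (fun i => w i)]
      _ ≤ _ := Finset.sum_le_sum key
  -- now bound the max
  have hzσ : ∑ i : Fin (n+1), z (σ i) = 0 := by rw [Equiv.sum_comp σ z]; exact hz
  have hwn : 0 ≤ w n := by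
    have h1 : ∑ i : Fin (n+1), z (σ i) ≤ (Finset.univ : Finset (Fin (n+1))).card • w n := by
      apply Finset.sum_le_card_nsmul
      intro i _
      have := hσ (Fin.le_last i)
      simpa [hw, hlast] using this
    rw [hzσ, Finset.card_univ, Fintype.card_fin, nsmul_eq_mul] at h1
    have hpos' : (0:ℝ) < (n+1 : ℕ) := by positivity
    nlinarith
  have hw0 : w 0 ≤ 0 := by
    have h1 : (Finset.univ : Finset (Fin (n+1))).card • w 0 ≤ ∑ i : Fin (n+1), z (σ i) := by
      apply Finset.card_nsmul_le_sum
      intro i _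
      have := hσ (Fin.zero_le i)
      simpa [hw] using this
    rw [hzσ, Finset.card_univ, Fintype.card_fin, nsmul_eq_mul] at h1
    have hpos' : (0:ℝ) < (n+1 : ℕ) := by positivity
    nlinarith
  have hM : (Finset.univ.sup' Finset.univ_nonempty fun i => |z i|) ≤ w n - w 0 := by
    apply Finset.sup'_le
    intro i _
    have hub : z i ≤ w n := by
      have := hσ (Fin.le_last (σ.symm i))
      simpa [hw, hlast] using this
    have hlb : w 0 ≤ z i := by
      have := hσ (Fin.zero_le (σ.symm i))
      simpa [hw] using this
    rw [abs_le]
    constructor <;> linarith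
  have := mul_le_mul_of_nonneg_left hM (le_of_lt hbbar)
  linarith
end

section
/- Let a^+ : [0,∞) → ℝ be bounded, continuous with a^+(0) > 0. Let δ : (0, ε̄) → (0, δ̄) where δ̄ = 1 ∧ inf{δ ≥ 0 : a^+(δ) = 0} > 0, and suppose ε/δ(ε) → 0 as ε → 0. Then ∫_0^{δ(ε)} exp(−(1/(2ε)) ∫_0^y a^+(x) dx) dy is asymptotically equivalent to 2ε/a^+(0) as ε → 0, i.e. the ratio of the two quantities converges to 1. -/
open Real intervalIntegral Filter Set

lemma intExpNeg (b L : ℝ) (hb : 0 < b) :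
    ∫ y in (0:ℝ)..L, Real.exp (-(b*y)) = (1 - Real.exp (-(b*L)))/b := by
  have h : ∀ y ∈ Set.uIcc (0:ℝ) L,
      HasDerivAt (fun y => -Real.exp (-(b*y))/b) (Real.exp (-(b*y))) y := by
    intro y _
    have h1 : HasDerivAt (fun y : ℝ => -(b*y)) (-b) y := by
      have h1' := ((hasDerivAt_id' y).const_mul b).neg; simp only [mul_one] at h1'; exact h1'
    have h2 : HasDerivAt (fun y : ℝ => Real.exp (-(b*y))) (Real.exp (-(b*y)) * (-b)) y :=
      by have h2' := (Real.hasDerivAt_exp (-(b*y))).comp y h1; exact h2'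
    have h3 := (h2.neg).div_const b
    rw [show Real.exp (-(b*y)) = -(Real.exp (-(b*y)) * -b) / b by field_simp]
    exact h3
  rw [intervalIntegral.integral_eq_sub_of_hasDerivAt h
    (Continuous.intervalIntegrable (by fun_prop) _ _)]
  simp [Real.exp_zero]
  ring

lemma auxUp (K p q T : ℝ) (hK : K ≠ 0) (hp : p ≠ 0) (hq : q ≠ 0) :
    (K / p + T) / (K / q) = q / p + q * T / K := by
  field_simp

lemma auxLow (x K p q : ℝ) (hK : K ≠ 0) (hp : p ≠ 0) (hq : q ≠ 0) :
    x / (p / K) / (K / q) = q * x / p := by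
  field_simp

lemma auxUp2 (a0 η τ : ℝ) (ha0 : 0 < a0) (hη1 : η ≤ a0 / 2) (hη2 : η ≤ a0 * τ / 8)
    (hτ : 0 < τ) : a0 ≤ (1 + τ / 4) * (a0 - η) := by nlinarith

lemma auxLow2 (a0 η E τ : ℝ) (ha0 : 0 < a0) (hη0 : 0 < η) (hη2 : η ≤ a0 * τ / 8)
    (hτ : 0 < τ) (hE : E < τ / 2) : (1 - τ) * (a0 + η) < a0 * (1 - E) := by
  nlinarith [mul_lt_mul_of_pos_left hE ha0, mul_pos hη0 hτ]

theorem stmt10 (a : ℝ → ℝ)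
    (hbdd : ∃ M : ℝ, ∀ x, 0 ≤ x → |a x| ≤ M)
    (hcont : ContinuousOn a (Set.Ici 0))
    (ha0 : 0 < a 0)
    (δbar : ℝ) (hδbar_pos : 0 < δbar) (hδbar_le : δbar ≤ 1)
    (hapos : ∀ x, 0 ≤ x → x < δbar → 0 < a x)
    (εbar : ℝ) (hεbar : 0 < εbar)
    (δf : ℝ → ℝ) (hδf : ∀ ε, 0 < ε → ε < εbar → δf ε ∈ Set.Ioo 0 δbar)
    (hratio : Filter.Tendsto (fun ε => ε / δf ε) (nhdsWithin 0 (Set.Ioi 0)) (nhds 0)) :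
    Filter.Tendsto
      (fun ε => (∫ y in (0:ℝ)..δf ε, Real.exp (-(1 / (2 * ε)) * ∫ x in (0:ℝ)..y, a x))
        / (2 * ε / a 0))
      (nhdsWithin 0 (Set.Ioi 0)) (nhds 1) := by
  rw [Metric.tendsto_nhds]
  intro τ hτ
  set a0 := a 0 with ha0def
  set η := min (a0 / 2) (a0 * τ / 8) with hηdef
  have hη0 : 0 < η := lt_min (by linarith) (by positivity)
  have hη1 : η ≤ a0 / 2 := min_le_left _ _
  have hη2 : η ≤ a0 * τ / 8 := min_le_right _ _
  -- find r > 0 with a close to a0 on [0, r]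
  obtain ⟨r, hr0, hrδ, hain⟩ :
      ∃ r, 0 < r ∧ r < δbar ∧ ∀ x, 0 ≤ x → x ≤ r → a0 - η ≤ a x ∧ a x ≤ a0 + η := by
    have hca : Filter.Tendsto a (nhdsWithin 0 (Set.Ici 0)) (nhds a0) :=
      hcont 0 Set.self_mem_Ici
    have hev : {x | dist (a x) a0 < η} ∈ nhdsWithin 0 (Set.Ici 0) :=
      hca (Metric.ball_mem_nhds _ hη0)
    obtain ⟨u, hu, hball⟩ := Metric.mem_nhdsWithin_iff.mp hev
    refine ⟨min (u/2) (δbar/2), lt_min (by linarith) (by linarith),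
      (min_le_right _ _).trans_lt (by linarith), ?_⟩
    intro x hx hxr
    have hxu : x ∈ Metric.ball (0:ℝ) u ∩ Set.Ici 0 := by
      constructor
      · rw [Metric.mem_ball, Real.dist_eq, sub_zero, abs_of_nonneg hx]
        exact lt_of_le_of_lt (hxr.trans (min_le_left _ _)) (by linarith)
      · exact hx
    have := hball hxu
    rw [Set.mem_setOf_eq, Real.dist_eq, abs_sub_lt_iff] at this
    constructor <;> linarith [this.1, this.2]
  set A : ℝ → ℝ := fun y => ∫ x in (0:ℝ)..y, a x with hAdef
  have haint : ∀ s t, 0 ≤ s → 0 ≤ t → IntervalIntegrable a MeasureTheory.volume s t := by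
    intro s t hs ht
    apply ContinuousOn.intervalIntegrable
    apply hcont.mono
    intro x hx
    rcases le_total s t with h | h
    · rw [Set.uIcc_of_le h] at hx; exact le_trans hs hx.1
    · rw [Set.uIcc_of_ge h] at hx; exact le_trans ht hx.1
  have hAub : ∀ y, 0 ≤ y → y ≤ r → A y ≤ (a0 + η) * y := by
    intro y hy hyr
    have h1 : A y ≤ ∫ x in (0:ℝ)..y, (a0 + η) := by
      apply intervalIntegral.integral_mono_on hy (haint 0 y le_rfl hy)
        (intervalIntegrable_const)
      intro x hx
      exact (hain x hx.1 (hx.2.trans hyr)).2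
    have h2 : (∫ x in (0:ℝ)..y, (a0 + η)) = (a0 + η) * y := by simp; ring
    linarith
  have hAlb : ∀ y, 0 ≤ y → y ≤ r → (a0 - η) * y ≤ A y := by
    intro y hy hyr
    have h1 : (∫ x in (0:ℝ)..y, (a0 - η)) ≤ A y := by
      apply intervalIntegral.integral_mono_on hy (intervalIntegrable_const)
        (haint 0 y le_rfl hy)
      intro x hx
      exact (hain x hx.1 (hx.2.trans hyr)).1
    have h2 : (∫ x in (0:ℝ)..y, (a0 - η)) = (a0 - η) * y := by simp; ring
    linarith
  have hAmono : ∀ y, r ≤ y → y < δbar → A r ≤ A y := by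
    intro y hry hyδ
    have hsplit : A r + ∫ x in r..y, a x = A y :=
      intervalIntegral.integral_add_adjacent_intervals
        (haint 0 r le_rfl hr0.le) (haint r y hr0.le (hr0.le.trans hry))
    have hnn : 0 ≤ ∫ x in r..y, a x := by
      apply intervalIntegral.integral_nonneg hry
      intro x hx
      exact (hapos x (hr0.le.trans hx.1) (lt_of_le_of_lt hx.2 hyδ)).le
    linarith
  have hAr : 0 < A r := lt_of_lt_of_le (by nlinarith) (hAlb r hr0.le le_rfl)
  have hAcont : ContinuousOn A (Set.Icc 0 δbar) := by
    have hint : MeasureTheory.IntegrableOn a (Set.uIcc 0 δbar) := by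
      rw [Set.uIcc_of_le hδbar_pos.le]
      exact (hcont.mono (Set.Icc_subset_Ici_self)).integrableOn_Icc
    have := intervalIntegral.continuousOn_primitive_interval hint
    rwa [Set.uIcc_of_le hδbar_pos.le] at this
  -- eventual facts
  have ev1 : ∀ᶠ ε in nhdsWithin (0:ℝ) (Set.Ioi 0), ε < εbar :=
    eventually_nhdsWithin_of_eventually_nhds (eventually_lt_nhds hεbar)
  have ev0 : ∀ᶠ ε in nhdsWithin (0:ℝ) (Set.Ioi 0), 0 < ε :=
    eventually_mem_nhdsWithin
  -- min r (δf ε) / ε → ∞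
  have htop1 : Filter.Tendsto (fun ε : ℝ => r / ε) (nhdsWithin 0 (Set.Ioi 0)) Filter.atTop := by
    simpa [div_eq_mul_inv] using tendsto_inv_nhdsGT_zero.const_mul_atTop hr0
  have htop2 : Filter.Tendsto (fun ε : ℝ => δf ε / ε) (nhdsWithin 0 (Set.Ioi 0))
      Filter.atTop := by
    have h1 : Filter.Tendsto (fun ε => ε / δf ε) (nhdsWithin 0 (Set.Ioi 0))
        (nhdsWithin 0 (Set.Ioi 0)) := by
      rw [tendsto_nhdsWithin_iff]
      refine ⟨hratio, ?_⟩
      filter_upwards [ev0, ev1] with ε hε hεb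
      exact div_pos hε (hδf ε hε hεb).1
    have := tendsto_inv_nhdsGT_zero.comp h1
    refine this.congr fun ε => ?_
    simp [Function.comp, inv_div]
  have htopm : Filter.Tendsto (fun ε : ℝ => min r (δf ε) / ε) (nhdsWithin 0 (Set.Ioi 0))
      Filter.atTop := by
    rw [Filter.tendsto_atTop]
    intro K
    filter_upwards [ev0, Filter.tendsto_atTop.mp htop1 K, Filter.tendsto_atTop.mp htop2 K]
      with ε hε h1 h2
    rw [← min_div_div_right hε.le]
    exact le_min h1 h2
  -- exponential smallness (lower bound error)
  have evE : ∀ᶠ ε in nhdsWithin (0:ℝ) (Set.Ioi 0),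
      Real.exp (-((a0 + η) / (2 * ε) * min r (δf ε))) < τ / 2 := by
    have h1 : Filter.Tendsto (fun ε : ℝ => Real.exp (-((a0 + η) / (2 * ε) * min r (δf ε))))
        (nhdsWithin 0 (Set.Ioi 0)) (nhds 0) := by
      have h2 : Filter.Tendsto (fun ε : ℝ => (a0 + η) / 2 * (min r (δf ε) / ε))
          (nhdsWithin 0 (Set.Ioi 0)) Filter.atTop :=
        htopm.const_mul_atTop (by positivity)
      have h3 := Real.tendsto_exp_atBot.comp (Filter.tendsto_neg_atTop_atBot.comp h2)
      refine h3.congr fun ε => ?_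
      simp only [Function.comp]
      ring_nf
    exact h1.eventually_lt_const (by positivity)
  -- tail smallness
  have evT : ∀ᶠ ε in nhdsWithin (0:ℝ) (Set.Ioi 0),
      a0 * Real.exp (-(A r / (2 * ε))) / (2 * ε) < τ / 4 := by
    have key : Filter.Tendsto (fun u : ℝ => u * Real.exp (-(A r * u))) Filter.atTop
        (nhds 0) := by
      have h1 := (Real.tendsto_pow_mul_exp_neg_atTop_nhds_zero 1).comp
        (Filter.tendsto_id.const_mul_atTop hAr)
      have h2 := h1.const_mul (1 / A r)
      rw [mul_zero] at h2
      refine h2.congr fun u => ?_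
      simp only [Function.comp, pow_one, id]
      field_simp
    have hu : Filter.Tendsto (fun ε : ℝ => (2 * ε)⁻¹) (nhdsWithin 0 (Set.Ioi 0))
        Filter.atTop := by
      have := tendsto_inv_nhdsGT_zero.const_mul_atTop (show (0:ℝ) < 1/2 by norm_num)
      refine this.congr fun ε => ?_
      rw [mul_inv]
      ring
    have h3 := (key.comp hu).const_mul a0
    rw [mul_zero] at h3
    have h4 : Filter.Tendsto (fun ε : ℝ => a0 * Real.exp (-(A r / (2 * ε))) / (2 * ε))
        (nhdsWithin 0 (Set.Ioi 0)) (nhds 0) := by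
      refine h3.congr fun ε => ?_
      simp only [Function.comp]
      rw [div_eq_mul_inv, div_eq_mul_inv]
      ring
    exact h4.eventually_lt_const (by positivity)
  -- main estimate
  filter_upwards [ev0, ev1, evE, evT] with ε hε hεb hE hT
  obtain ⟨hδ0, hδb⟩ := hδf ε hε hεb
  set δ := δf ε with hδdef
  set m := min r δ with hmdef
  have hm0 : 0 < m := lt_min hr0 hδ0
  have hmδ : m ≤ δ := min_le_right _ _
  have hmr : m ≤ r := min_le_left _ _
  have hKpos : (0:ℝ) < 2 * ε := by linarith
  have haη : 0 < a0 - η := by linarith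
  have hfc : ContinuousOn (fun y => Real.exp (-(1 / (2 * ε)) * A y)) (Set.Icc 0 δbar) :=
    Real.continuous_exp.comp_continuousOn (continuousOn_const.mul hAcont)
  have hfi : ∀ s t, s ∈ Set.Icc (0:ℝ) δbar → t ∈ Set.Icc (0:ℝ) δbar →
      IntervalIntegrable (fun y => Real.exp (-(1 / (2 * ε)) * A y))
        MeasureTheory.volume s t :=
    fun s t hs ht => (hfc.mono (Set.uIcc_subset_Icc hs ht)).intervalIntegrable
  have h0mem : (0:ℝ) ∈ Set.Icc (0:ℝ) δbar := ⟨le_rfl, hδbar_pos.le⟩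
  have hmmem : m ∈ Set.Icc (0:ℝ) δbar := ⟨hm0.le, (hmδ.trans hδb.le)⟩
  have hδmem : δ ∈ Set.Icc (0:ℝ) δbar := ⟨hδ0.le, hδb.le⟩
  set I := ∫ y in (0:ℝ)..δ, Real.exp (-(1 / (2 * ε)) * A y) with hIdef
  -- lower bound
  have hlow1 : (∫ y in (0:ℝ)..m, Real.exp (-((a0 + η) / (2 * ε) * y)))
      ≤ ∫ y in (0:ℝ)..m, Real.exp (-(1 / (2 * ε)) * A y) := by
    apply intervalIntegral.integral_mono_on hm0.le
      (Continuous.intervalIntegrable (by fun_prop) _ _) (hfi 0 m h0mem hmmem)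
    intro y hy
    apply Real.exp_le_exp.mpr
    have hAy := hAub y hy.1 (hy.2.trans hmr)
    have h2 : (1 / (2 * ε)) * A y ≤ (1 / (2 * ε)) * ((a0 + η) * y) :=
      mul_le_mul_of_nonneg_left hAy (by positivity)
    have heq : (a0 + η) / (2 * ε) * y = 1 / (2 * ε) * ((a0 + η) * y) := by ring
    linarith
  have hlow2 : (∫ y in (0:ℝ)..m, Real.exp (-((a0 + η) / (2 * ε) * y)))
      = (1 - Real.exp (-((a0 + η) / (2 * ε) * m))) / ((a0 + η) / (2 * ε)) :=
    intExpNeg _ m (by positivity)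
  have hlow3 : (∫ y in (0:ℝ)..m, Real.exp (-(1 / (2 * ε)) * A y)) ≤ I := by
    apply intervalIntegral.integral_mono_interval le_rfl hm0.le hmδ
      (Filter.Eventually.of_forall fun y => (Real.exp_pos _).le) (hfi 0 δ h0mem hδmem)
  have hlow : (1 - Real.exp (-((a0 + η) / (2 * ε) * m))) / ((a0 + η) / (2 * ε)) ≤ I := by
    rw [← hlow2]; exact hlow1.trans hlow3
  -- upper bound
  have hsplit : I = (∫ y in (0:ℝ)..m, Real.exp (-(1 / (2 * ε)) * A y))
      + ∫ y in m..δ, Real.exp (-(1 / (2 * ε)) * A y) :=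
    (intervalIntegral.integral_add_adjacent_intervals (hfi 0 m h0mem hmmem)
      (hfi m δ hmmem hδmem)).symm
  have hup1 : (∫ y in (0:ℝ)..m, Real.exp (-(1 / (2 * ε)) * A y))
      ≤ 2 * ε / (a0 - η) := by
    have h1 : (∫ y in (0:ℝ)..m, Real.exp (-(1 / (2 * ε)) * A y))
        ≤ ∫ y in (0:ℝ)..m, Real.exp (-((a0 - η) / (2 * ε) * y)) := by
      apply intervalIntegral.integral_mono_on hm0.le (hfi 0 m h0mem hmmem)
        (Continuous.intervalIntegrable (by fun_prop) _ _)
      intro y hy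
      apply Real.exp_le_exp.mpr
      have hAy := hAlb y hy.1 (hy.2.trans hmr)
      have h2 : (1 / (2 * ε)) * ((a0 - η) * y) ≤ (1 / (2 * ε)) * A y :=
        mul_le_mul_of_nonneg_left hAy (by positivity)
      have heq : (a0 - η) / (2 * ε) * y = 1 / (2 * ε) * ((a0 - η) * y) := by ring
      linarith
    rw [intExpNeg _ m (by positivity)] at h1
    have h3 : (1 - Real.exp (-((a0 - η) / (2 * ε) * m))) / ((a0 - η) / (2 * ε))
        ≤ 1 / ((a0 - η) / (2 * ε)) := by
      apply div_le_div_of_nonneg_right ?_ (by positivity) |>.trans_eq rfl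
      · linarith [Real.exp_pos (-((a0 - η) / (2 * ε) * m))]
    have h4 : 1 / ((a0 - η) / (2 * ε)) = 2 * ε / (a0 - η) := one_div_div _ _
    linarith
  have hup2 : (∫ y in m..δ, Real.exp (-(1 / (2 * ε)) * A y))
      ≤ Real.exp (-(A r / (2 * ε))) := by
    rcases le_or_gt r δ with h | h
    · have hmr' : m = r := min_eq_left h
      rw [hmr']
      have h1 : (∫ y in r..δ, Real.exp (-(1 / (2 * ε)) * A y))
          ≤ ∫ y in r..δ, Real.exp (-(1 / (2 * ε)) * A r) := by
        apply intervalIntegral.integral_mono_on h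
          (hfi r δ ⟨hr0.le, hrδ.le⟩ hδmem) intervalIntegrable_const
        intro y hy
        apply Real.exp_le_exp.mpr
        have hAy := hAmono y hy.1 (lt_of_le_of_lt hy.2 hδb)
        have h2 : (1 / (2 * ε)) * A r ≤ (1 / (2 * ε)) * A y :=
          mul_le_mul_of_nonneg_left hAy (by positivity)
        linarith
      have h2 : (∫ y in r..δ, Real.exp (-(1 / (2 * ε)) * A r))
          = (δ - r) * Real.exp (-(1 / (2 * ε)) * A r) := by
        simp [smul_eq_mul]
      have h3 : (δ - r) * Real.exp (-(1 / (2 * ε)) * A r)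
          ≤ Real.exp (-(A r / (2 * ε))) := by
        have heq : -(1 / (2 * ε)) * A r = -(A r / (2 * ε)) := by ring
        rw [heq]
        nth_rewrite 2 [← one_mul (Real.exp (-(A r / (2 * ε))))]
        apply mul_le_mul_of_nonneg_right _ (Real.exp_pos _).le
        linarith
      linarith
    · have hmr' : m = δ := min_eq_right h.le
      rw [hmr', intervalIntegral.integral_same]
      exact (Real.exp_pos _).le
  have hup : I ≤ 2 * ε / (a0 - η) + Real.exp (-(A r / (2 * ε))) := by
    rw [hsplit]; exact add_le_add hup1 hup2
  -- combine
  have hD : (0:ℝ) < 2 * ε / a0 := by positivity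
  have hgoal : (∫ y in (0:ℝ)..δ, Real.exp (-(1 / (2 * ε)) * ∫ x in (0:ℝ)..y, a x)) = I :=
    rfl
  show dist ((∫ y in (0:ℝ)..δ, Real.exp (-(1 / (2 * ε)) * ∫ x in (0:ℝ)..y, a x))
    / (2 * ε / a0)) 1 < τ
  rw [hgoal, Real.dist_eq, abs_sub_lt_iff]
  clear_value A a0 η δ m
  set E := Real.exp (-((a0 + η) / (2 * ε) * m)) with hEdef
  have hEpos : 0 < E := Real.exp_pos _
  set T := Real.exp (-(A r / (2 * ε))) with hTdef
  have hTpos : 0 < T := Real.exp_pos _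
  clear_value I E T
  constructor
  · -- upper
    have h1 : I / (2 * ε / a0) ≤ (2 * ε / (a0 - η) + T) / (2 * ε / a0) :=
      (div_le_div_iff_of_pos_right hD).mpr hup
    have h2 : (2 * ε / (a0 - η) + T) / (2 * ε / a0)
        = a0 / (a0 - η) + a0 * T / (2 * ε) :=
      auxUp _ _ _ _ (ne_of_gt hKpos) (ne_of_gt haη) (ne_of_gt ha0)
    have h3 : a0 / (a0 - η) ≤ 1 + τ / 4 := by
      rw [div_le_iff₀ haη]
      exact auxUp2 a0 η τ ha0 hη1 hη2 hτ
    have h4 : a0 * T / (2 * ε) < τ / 4 := hT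
    calc I / (2 * ε / a0) - 1 ≤ (2 * ε / (a0 - η) + T) / (2 * ε / a0) - 1 := by linarith
      _ = a0 / (a0 - η) + a0 * T / (2 * ε) - 1 := by rw [h2]
      _ < τ := by linarith
  · -- lower
    have h1 : (1 - E) / ((a0 + η) / (2 * ε)) / (2 * ε / a0) ≤ I / (2 * ε / a0) :=
      (div_le_div_iff_of_pos_right hD).mpr hlow
    have h2 : (1 - E) / ((a0 + η) / (2 * ε)) / (2 * ε / a0) = a0 * (1 - E) / (a0 + η) :=
      auxLow _ _ _ _ (ne_of_gt hKpos) (by positivity) (ne_of_gt ha0)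
    have h3 : 1 - τ < a0 * (1 - E) / (a0 + η) := by
      rw [lt_div_iff₀ (by positivity)]
      exact auxLow2 a0 η E τ ha0 hη0 hη2 hτ hE
    rw [h2] at h1
    linarith
end
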